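/- In a local Moufang set, U_0^∘ · U_∞ ⊆ U_∞ · H · U_0^∘, where H = ⟨μ_x μ_y : x,y units⟩ is the Hua subgroup and U_0^∘ is the kernel of the induced action of U_0 on the quotient X̄. -/

import Mathlib

/-!
Local Moufang sets, following E. Rijcken, "Local Moufang sets".
A local Moufang set is a set `X` with an equivalence relation (a `Setoid`)
having more than 2 classes, together with root groups `U x` of
equivalence-preserving permutations, satisfying (LM0), (LM1), (LM1'), (LM2).
We use left actions; the paper's right-composition word `a₁a₂⋯aₙ` corresponds
to our product `aₙ * ⋯ * a₁`, and the paper's conjugation `g^h = h⁻¹gh`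
corresponds to `h * g * h⁻¹` (i.e. `MulAut.conj h g`).
-/

variable {X : Type*}

/-- A permutation of `X` preserves the equivalence relation `r`. -/
def PreservesRel (r : Setoid X) (g : Equiv.Perm X) : Prop :=
  ∀ a b : X, r.r a b ↔ r.r (g a) (g b)

/-- A local pre-Moufang set: axioms (LM0), (LM1), (LM1'). -/
structure IsLocalPreMoufangSet (r : Setoid X) (U : X → Subgroup (Equiv.Perm X)) : Prop where
  /-- `X` has more than two equivalence classes. -/
  big : ∃ a b c : X, ¬ r.r a b ∧ ¬ r.r a c ∧ ¬ r.r b c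
  /-- root groups consist of equivalence-preserving permutations -/
  preserves : ∀ x : X, ∀ g ∈ U x, PreservesRel r g
  /-- (LM0): if `x ∼ y` then the induced actions of `U x` and `U y` on the quotient agree -/
  lm0 : ∀ x y : X, r.r x y → ∀ g ∈ U x, ∃ h ∈ U y, ∀ a : X, r.r (g a) (h a)
  /-- (LM1): `U x` fixes `x` ... -/
  fixes : ∀ x : X, ∀ g ∈ U x, g x = x
  /-- (LM1): ... and acts sharply transitively on the complement of the class of `x` -/
  lm1 : ∀ x a b : X, ¬ r.r a x → ¬ r.r b x → ∃! g : Equiv.Perm X, g ∈ U x ∧ g a = b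
  /-- (LM1'): the induced action on the quotient is transitive away from the class of `x` ... -/
  lm1'_trans : ∀ x a b : X, ¬ r.r a x → ¬ r.r b x → ∃ g ∈ U x, r.r (g a) b
  /-- (LM1'): ... and sharply so -/
  lm1'_sharp : ∀ x : X, ∀ g ∈ U x, ∀ h ∈ U x, ∀ a : X, ¬ r.r a x →
    r.r (g a) (h a) → ∀ b : X, r.r (g b) (h b)

/-- A local Moufang set: a local pre-Moufang set satisfying (LM2). -/
structure IsLocalMoufangSet (r : Setoid X) (U : X → Subgroup (Equiv.Perm X))
    extends IsLocalPreMoufangSet r U : Prop where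
  /-- (LM2): `U x ^ g = U (x g)` for all `g` in the little projective group `⟨U y : y⟩` -/
  lm2 : ∀ x : X, ∀ g ∈ (⨆ y : X, U y), (U x).map (MulAut.conj g).toMonoidHom = U (g x)

/-- `μ` is the μ-map of the point `x` w.r.t. the basis `(o, i) = (0, ∞)`:
it lies in the double coset `U 0 · α_x · U 0` (where `α_x` is the unique element
of `U ∞` with `0 · α_x = x`) and interchanges `0` and `∞`. -/
def IsMuMap (U : X → Subgroup (Equiv.Perm X)) (o i x : X) (μ : Equiv.Perm X) : Prop :=
  ∃ a : Equiv.Perm X, a ∈ U i ∧ a o = x ∧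
    (∃ u ∈ U o, ∃ v ∈ U o, μ = u * a * v) ∧ μ o = i ∧ μ i = o

/-- The Hua subgroup `H = ⟨μ_x μ_y : x, y units⟩` w.r.t. the basis `(o, i) = (0, ∞)`. -/
def HuaSubgroup (r : Setoid X) (U : X → Subgroup (Equiv.Perm X)) (o i : X) :
    Subgroup (Equiv.Perm X) :=
  Subgroup.closure {g | ∃ x y μx μy, (¬ r.r x o ∧ ¬ r.r x i) ∧ (¬ r.r y o ∧ ¬ r.r y i) ∧
    IsMuMap U o i x μx ∧ IsMuMap U o i y μy ∧ g = μx * μy}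

theorem Equiv.Perm.apply_inv_self (f : Equiv.Perm X) (x : X) : f (f⁻¹ x) = x :=
  (Equiv.eq_symm_apply f).mp rfl

theorem Equiv.Perm.inv_apply_self (f : Equiv.Perm X) (x : X) : f⁻¹ (f x) = x :=
  Equiv.Perm.inv_eq_iff_eq.mpr rfl

section Statement6Aux

variable {r : Setoid X} {U : X → Subgroup (Equiv.Perm X)}

private lemma prInv {g : Equiv.Perm X} (h : PreservesRel r g) : PreservesRel r g⁻¹ := by
  intro a b
  simpa using (h (g⁻¹ a) (g⁻¹ b)).symm

private lemma prMul {g h : Equiv.Perm X} (hg : PreservesRel r g) (hh : PreservesRel r h) :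
    PreservesRel r (g * h) := by
  intro a b
  rw [Equiv.Perm.mul_apply, Equiv.Perm.mul_apply]
  exact (hh a b).trans (hg (h a) (h b))

private lemma memSupr {x : X} {g : Equiv.Perm X} (h : g ∈ U x) : g ∈ ⨆ y : X, U y :=
  Subgroup.mem_iSup_of_mem x h

private lemma conjMem (hM : IsLocalMoufangSet r U) {gg : Equiv.Perm X}
    (hgg : gg ∈ ⨆ y : X, U y) {x : X} {a : Equiv.Perm X} (ha : a ∈ U x) :
    gg * a * gg⁻¹ ∈ U (gg x) := by
  rw [← hM.lm2 x gg hgg]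
  exact Subgroup.mem_map.mpr ⟨a, ha, by simp [MulAut.conj_apply]⟩

private lemma existsUnit (hM : IsLocalMoufangSet r U) (o i : X) :
    ∃ e : X, ¬ r.r e o ∧ ¬ r.r e i := by
  obtain ⟨a, b, c, hab, hac, hbc⟩ := hM.big
  by_cases hao : r.r a o
  · by_cases hbi : r.r b i
    · exact ⟨c, fun h => hac (r.iseqv.trans hao (r.iseqv.symm h)),
        fun h => hbc (r.iseqv.trans hbi (r.iseqv.symm h))⟩
    · by_cases hbo : r.r b o
      · exact absurd (r.iseqv.trans hao (r.iseqv.symm hbo)) hab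
      · exact ⟨b, hbo, hbi⟩
  · by_cases hai : r.r a i
    · by_cases hbo : r.r b o
      · exact ⟨c, fun h => hbc (r.iseqv.trans hbo (r.iseqv.symm h)),
          fun h => hac (r.iseqv.trans hai (r.iseqv.symm h))⟩
      · by_cases hbi : r.r b i
        · exact absurd (r.iseqv.trans hai (r.iseqv.symm hbi)) hab
        · exact ⟨b, hbo, hbi⟩
    · exact ⟨a, hao, hai⟩

private lemma huaFacts (hM : IsLocalMoufangSet r U) (o i : X) {hh : Equiv.Perm X}
    (hmem : hh ∈ HuaSubgroup r U o i) : hh ∈ (⨆ y : X, U y) ∧ hh i = i := by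
  have hle : HuaSubgroup r U o i ≤ (⨆ y : X, U y) ⊓ MulAction.stabilizer (Equiv.Perm X) i := by
    refine (Subgroup.closure_le _).mpr ?_
    rintro g ⟨x, y, μx, μy, -, -, hμx, hμy, rfl⟩
    obtain ⟨a1, ha1, -, ⟨u1, hu1, v1, hv1, he1⟩, hμxo, hμxi⟩ := hμx
    obtain ⟨a2, ha2, -, ⟨u2, hu2, v2, hv2, he2⟩, hμyo, hμyi⟩ := hμy
    refine Subgroup.mem_inf.mpr ⟨mul_mem ?_ ?_, ?_⟩
    · rw [he1]; exact mul_mem (mul_mem (memSupr hu1) (memSupr ha1)) (memSupr hv1)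
    · rw [he2]; exact mul_mem (mul_mem (memSupr hu2) (memSupr ha2)) (memSupr hv2)
    · refine MulAction.mem_stabilizer_iff.mpr ?_
      simp [Equiv.Perm.smul_def, Equiv.Perm.mul_apply, hμyi, hμxo]
  have h2 := Subgroup.mem_inf.mp (hle hmem)
  exact ⟨h2.1, by simpa [Equiv.Perm.smul_def] using MulAction.mem_stabilizer_iff.mp h2.2⟩

/-- The main case: `u o` is a unit. -/
private lemma caseB (hM : IsLocalMoufangSet r U) (o i : X) (hoi : ¬ r.r o i)
    {u g : Equiv.Perm X} (hu : u ∈ U i) (hg : g ∈ U o) (hgq : ∀ b : X, r.r (g b) b)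
    (hx : ¬ r.r (u o) o) :
    ∃ v ∈ U i, ∃ hh ∈ HuaSubgroup r U o i, ∃ w ∈ U o,
      (∀ b : X, r.r (w b) b) ∧ u * g = w * hh * v := by
  have hio : ¬ r.r i o := fun h => hoi (r.iseqv.symm h)
  have prU : ∀ {x : X} {a : Equiv.Perm X}, a ∈ U x → PreservesRel r a :=
    fun {x a} ha => hM.preserves x a ha
  have hui : u i = i := hM.fixes i u hu
  have hgo : g o = o := hM.fixes o g hg
  have hxi : ¬ r.r (u o) i := fun h => hoi (((prU hu) o i).mpr (by rwa [hui]))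
  -- the element p ∈ U o with p (u o) = i
  obtain ⟨p, ⟨hp, hpx⟩, -⟩ := hM.lm1 o (u o) i hx hio
  -- z := u⁻¹ o is a unit
  have huz : u (u⁻¹ o) = o := (Equiv.Perm.apply_inv_self u) o
  have hzo : ¬ r.r (u⁻¹ o) o := by
    intro h
    have h2 := ((prU hu) (u⁻¹ o) o).mp h
    rw [huz] at h2
    exact hx (r.iseqv.symm h2)
  have hzi : ¬ r.r (u⁻¹ o) i := by
    intro h
    have h2 := ((prU hu) (u⁻¹ o) i).mp h
    rw [huz, hui] at h2
    exact hoi h2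
  obtain ⟨q, ⟨hq, hqi⟩, -⟩ := hM.lm1 o i (u⁻¹ o) hio hzo
  have hqo : q o = o := hM.fixes o q hq
  -- the μ-map of u o
  set μ : Equiv.Perm X := p * u * q with hμdef
  have hμsupr : μ ∈ ⨆ y : X, U y :=
    mul_mem (mul_mem (memSupr hp) (memSupr hu)) (memSupr hq)
  have prμ : PreservesRel r μ := prMul (prMul (prU hp) (prU hu)) (prU hq)
  have hμo : μ o = i := by
    simp only [hμdef, Equiv.Perm.mul_apply, hqo, hpx]
  have hμi : μ i = o := by
    simp only [hμdef, Equiv.Perm.mul_apply, hqi, huz]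
    exact hM.fixes o p hp
  have hμinvo : μ⁻¹ o = i := by rw [← hμi]; exact (Equiv.Perm.inv_apply_self μ) i
  have hμinvi : μ⁻¹ i = o := by rw [← hμo]; exact (Equiv.Perm.inv_apply_self μ) o
  have hμmu : IsMuMap U o i (u o) μ := ⟨u, hu, rfl, ⟨p, hp, q, hq, rfl⟩, hμo, hμi⟩
  -- q₁ := q⁻¹ * g
  set q₁ : Equiv.Perm X := q⁻¹ * g with hq₁def
  have hq₁ : q₁ ∈ U o := mul_mem (inv_mem hq) hg
  have hq₁o : q₁ o = o := by
    simp only [hq₁def, Equiv.Perm.mul_apply, hgo]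
    conv_lhs => rw [← hqo]
    exact (Equiv.Perm.inv_apply_self q) o
  -- y := q₁ i is a unit
  have hyrel : r.r (q₁ i) (q⁻¹ i) := by
    have h2 := ((prInv (prU hq)) (g i) i).mp (hgq i)
    simpa [hq₁def, Equiv.Perm.mul_apply] using h2
  have hqinvio : ¬ r.r (q⁻¹ i) o := by
    intro h
    have h2 := ((prU hq) (q⁻¹ i) o).mp h
    rw [(Equiv.Perm.apply_inv_self q), hqo] at h2
    exact hio h2
  have hqinvii : ¬ r.r (q⁻¹ i) i := by
    intro h
    have h2 := ((prU hq) (q⁻¹ i) i).mp h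
    rw [(Equiv.Perm.apply_inv_self q), hqi] at h2
    exact hzi (r.iseqv.symm h2)
  have hyo : ¬ r.r (q₁ i) o := fun h => hqinvio (r.iseqv.trans (r.iseqv.symm hyrel) h)
  have hyi : ¬ r.r (q₁ i) i := fun h => hqinvii (r.iseqv.trans (r.iseqv.symm hyrel) h)
  -- y' := q₁⁻¹ i is a unit
  have hy'o : ¬ r.r (q₁⁻¹ i) o := by
    intro h
    have h2 := ((prU hq₁) (q₁⁻¹ i) o).mp h
    rw [(Equiv.Perm.apply_inv_self q₁), hq₁o] at h2
    exact hio h2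
  have hy'i : ¬ r.r (q₁⁻¹ i) i := by
    intro h
    have h2 := ((prU hq₁) (q₁⁻¹ i) i).mp h
    rw [(Equiv.Perm.apply_inv_self q₁)] at h2
    exact hyi (r.iseqv.symm h2)
  -- s ∈ U i with s (q₁ i) = o, and t ∈ U i with t o = q₁⁻¹ i
  obtain ⟨s, ⟨hs, hsy⟩, -⟩ := hM.lm1 i (q₁ i) o hyi hoi
  obtain ⟨t, ⟨ht, hto⟩, -⟩ := hM.lm1 i o (q₁⁻¹ i) hoi hy'i
  have hti : t i = i := hM.fixes i t ht
  have hsi : s i = i := hM.fixes i s hs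
  -- the μ-map ν of q₁⁻¹ i
  set ν : Equiv.Perm X := s * q₁ * t with hνdef
  have hνsupr : ν ∈ ⨆ y : X, U y :=
    mul_mem (mul_mem (memSupr hs) (memSupr hq₁)) (memSupr ht)
  have hνi : ν i = o := by
    simp only [hνdef, Equiv.Perm.mul_apply, hti, hsy]
  have hνo : ν o = i := by
    simp only [hνdef, Equiv.Perm.mul_apply, hto, (Equiv.Perm.apply_inv_self q₁), hsi]
  have hνinvi : ν⁻¹ i = o := by rw [← hνo]; exact (Equiv.Perm.inv_apply_self ν) o
  have hcmem : ν⁻¹ * s * ν ∈ U o := by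
    have h2 := conjMem hM (inv_mem hνsupr) hs
    rwa [inv_inv, hνinvi] at h2
  have hνeq : ν = q₁ * t * (ν⁻¹ * s * ν) := by
    simp only [hνdef]; group
  have hνmu : IsMuMap U o i (q₁⁻¹ i) ν :=
    ⟨t, ht, hto, ⟨q₁, hq₁, ν⁻¹ * s * ν, hcmem, hνeq⟩, hνo, hνi⟩
  -- the Hua element
  have hhua : μ * ν ∈ HuaSubgroup r U o i :=
    Subgroup.subset_closure
      ⟨u o, q₁⁻¹ i, μ, ν, ⟨hx, hxi⟩, ⟨hy'o, hy'i⟩, hμmu, hνmu, rfl⟩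
  -- w := p⁻¹ * (μ * s⁻¹ * μ⁻¹) ∈ U o
  have hwmem : p⁻¹ * (μ * s⁻¹ * μ⁻¹) ∈ U o := by
    have h2 := conjMem hM hμsupr (inv_mem hs)
    rw [hμi] at h2
    exact mul_mem (inv_mem hp) h2
  -- v₂ := μ⁻¹ * p⁻¹ * μ ∈ U i, and s ≡ v₂ on the quotient
  have hv₂mem : μ⁻¹ * p⁻¹ * μ ∈ U i := by
    have h2 := conjMem hM (inv_mem hμsupr) (inv_mem hp)
    rwa [inv_inv, hμinvo] at h2
  have hsv₂y : r.r (s (q₁ i)) ((μ⁻¹ * p⁻¹ * μ) (q₁ i)) := by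
    rw [hsy]
    have hμq₁i : μ (q₁ i) = p (u (g i)) := by
      simp only [hμdef, hq₁def, Equiv.Perm.mul_apply, (Equiv.Perm.apply_inv_self q)]
    have h1 : r.r (u (g i)) i := by
      have h2 := ((prU hu) (g i) i).mp (hgq i)
      rwa [hui] at h2
    have h2 : r.r (μ (q₁ i)) (p i) := by
      rw [hμq₁i]; exact ((prU hp) (u (g i)) i).mp h1
    have h3 : r.r (p⁻¹ (μ (q₁ i))) i := by
      have h4 := ((prInv (prU hp)) (μ (q₁ i)) (p i)).mp h2
      rwa [(Equiv.Perm.inv_apply_self p)] at h4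
    have h4 : r.r (μ⁻¹ (p⁻¹ (μ (q₁ i)))) o := by
      have h5 := ((prInv prμ) (p⁻¹ (μ (q₁ i))) i).mp h3
      rwa [hμinvi] at h5
    have h6 : (μ⁻¹ * p⁻¹ * μ) (q₁ i) = μ⁻¹ (p⁻¹ (μ (q₁ i))) := by
      simp [Equiv.Perm.mul_apply]
    rw [h6]
    exact r.iseqv.symm h4
  have hsv : ∀ b : X, r.r (s b) ((μ⁻¹ * p⁻¹ * μ) b) :=
    hM.lm1'_sharp i s hs (μ⁻¹ * p⁻¹ * μ) hv₂mem (q₁ i) hyi hsv₂y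
  -- w acts trivially on the quotient
  have hwq : ∀ b : X, r.r ((p⁻¹ * (μ * s⁻¹ * μ⁻¹)) b) b := by
    intro b
    have h1 : r.r (s⁻¹ (μ⁻¹ b)) ((μ⁻¹ * p⁻¹ * μ)⁻¹ (μ⁻¹ b)) := by
      have h2 := hsv (s⁻¹ (μ⁻¹ b))
      rw [(Equiv.Perm.apply_inv_self s)] at h2
      have h3 := ((prInv (prU hv₂mem)) (μ⁻¹ b) ((μ⁻¹ * p⁻¹ * μ) (s⁻¹ (μ⁻¹ b)))).mp h2
      rw [Equiv.Perm.inv_apply_self] at h3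
      exact r.iseqv.symm h3
    have h4 : r.r ((p⁻¹ * (μ * s⁻¹ * μ⁻¹)) b)
        ((p⁻¹ * (μ * (μ⁻¹ * p⁻¹ * μ)⁻¹ * μ⁻¹)) b) := by
      have h5 := ((prMul (prInv (prU hp)) prμ) (s⁻¹ (μ⁻¹ b)) ((μ⁻¹ * p⁻¹ * μ)⁻¹ (μ⁻¹ b))).mp h1
      simpa [Equiv.Perm.mul_apply] using h5
    have h6 : p⁻¹ * (μ * (μ⁻¹ * p⁻¹ * μ)⁻¹ * μ⁻¹) = 1 := by group
    rw [h6] at h4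
    simpa using h4
  refine ⟨t⁻¹, inv_mem ht, μ * ν, hhua, p⁻¹ * (μ * s⁻¹ * μ⁻¹), hwmem, hwq, ?_⟩
  -- the exact group identity
  have hgeq : g = q * q₁ := by simp only [hq₁def]; group
  rw [hgeq]
  simp only [hμdef, hνdef]
  group

end Statement6Aux
/-- in a local Moufang set, `U 0 ^∘ · U ∞ ⊆ U ∞ · H · U 0 ^∘`, where
`U 0 ^∘` is the kernel of the induced action of `U 0` on the quotient and `H` is the
Hua subgroup.  (With right actions, the product "first `g ∈ U 0 ^∘`, then `u ∈ U ∞`"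
is our `u * g`, and "first `v ∈ U ∞`, then `h ∈ H`, then `w ∈ U 0 ^∘`" is `w * h * v`.) -/
theorem statement6 (r : Setoid X) (U : X → Subgroup (Equiv.Perm X))
    (hM : IsLocalMoufangSet r U) (o i : X) (hoi : ¬ r.r o i) :
    ∀ g ∈ U o, (∀ b : X, r.r (g b) b) → ∀ u ∈ U i,
      ∃ v ∈ U i, ∃ hh ∈ HuaSubgroup r U o i, ∃ w ∈ U o,
        (∀ b : X, r.r (w b) b) ∧ u * g = w * hh * v := by
  intro g hg hgq u hu
  by_cases hx : r.r (u o) o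
  · -- u acts trivially on the quotient
    have huq : ∀ b : X, r.r (u b) b := by
      have h1 : r.r (u o) ((1 : Equiv.Perm X) o) := by simpa using hx
      have h2 := hM.lm1'_sharp i u hu 1 (one_mem _) o (fun h => hoi h) h1
      intro b; simpa using h2 b
    obtain ⟨e, heo, hei⟩ := existsUnit hM o i
    obtain ⟨α, ⟨hα, hαo⟩, -⟩ := hM.lm1 i o e hoi hei
    have hαx : ¬ r.r (α o) o := by rwa [hαo]
    obtain ⟨v₂, hv₂, hh₂, hhh₂, w₂, hw₂, hw₂q, heq₂⟩ := caseB hM o i hoi hα hg hgq hαx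
    have hu₁ : u * α⁻¹ ∈ U i := mul_mem hu (inv_mem hα)
    have hz₀o : ¬ r.r (α⁻¹ o) o := by
      intro h
      have h2 := ((hM.preserves i α hα) (α⁻¹ o) o).mp h
      rw [(Equiv.Perm.apply_inv_self α), hαo] at h2
      exact heo (r.iseqv.symm h2)
    have hx₁ : ¬ r.r ((u * α⁻¹) o) o := by
      intro h
      rw [Equiv.Perm.mul_apply] at h
      exact hz₀o (r.iseqv.trans (r.iseqv.symm (huq (α⁻¹ o))) h)
    obtain ⟨v₁, hv₁, hh₁, hhh₁, w₁, hw₁, hw₁q, heq₁⟩ := caseB hM o i hoi hu₁ hw₂ hw₂q hx₁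
    obtain ⟨hh₂supr, hh₂i⟩ := huaFacts hM o i hhh₂
    have hv₁' : hh₂⁻¹ * v₁ * hh₂ ∈ U i := by
      have h2 := conjMem hM (inv_mem hh₂supr) hv₁
      have h3 : hh₂⁻¹ i = i := by
        conv_lhs => rw [← hh₂i]
        exact (Equiv.Perm.inv_apply_self hh₂) i
      rwa [inv_inv, h3] at h2
    refine ⟨(hh₂⁻¹ * v₁ * hh₂) * v₂, mul_mem hv₁' hv₂, hh₁ * hh₂, mul_mem hhh₁ hhh₂,
      w₁, hw₁, hw₁q, ?_⟩
    have hsplit : u * g = (u * α⁻¹) * (α * g) := by group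
    rw [hsplit, heq₂]
    have h2 : (u * α⁻¹) * (w₂ * hh₂ * v₂) = ((u * α⁻¹) * w₂) * (hh₂ * v₂) := by group
    rw [h2, heq₁]
    group
  · exact caseB hM o i hoi hu hg hgq hx
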